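/- If S_m ∈ ℝ^{d×m} has columns s₁, …, s_m that are orthonormal with respect to the inner product induced by a symmetric positive definite matrix B (i.e., S_mᵀ B S_m = I_m), then the matrix Σ_m := Σ₀ − Σ₀ Aᵀ S_m S_mᵀ A Σ₀, with B = A Σ₀ Aᵀ and Σ₀ symmetric positive definite, is symmetric positive semidefinite. -/

import Mathlib

open Matrix

/-- The BayesCG posterior covariance `Σₘ = Σ₀ − Σ₀ Aᵀ Sₘ Sₘᵀ A Σ₀` is symmetric positive
semidefinite, when the columns of `Sₘ` are orthonormal in the inner product induced by
`B = A Σ₀ Aᵀ`. -/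
theorem stmt_11 {d m : ℕ} (A Sig0 : Matrix (Fin d) (Fin d) ℝ)
    (hA : IsUnit A.det) (hSig0 : Sig0.PosDef)
    (S : Matrix (Fin d) (Fin m) ℝ) (hS : Sᵀ * (A * Sig0 * Aᵀ) * S = 1) :
    (Sig0 - Sig0 * Aᵀ * S * Sᵀ * A * Sig0).PosSemidef := by
  have hct : ∀ (k l : ℕ) (M : Matrix (Fin k) (Fin l) ℝ), Mᴴ = Mᵀ := fun _ _ M =>
    conjTranspose_eq_transpose_of_trivial M
  -- B is PSD
  have hB : (A * Sig0 * Aᵀ).PosSemidef := by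
    have := hSig0.posSemidef.mul_mul_conjTranspose_same A
    rwa [hct] at this
  set B : Matrix (Fin d) (Fin d) ℝ := A * Sig0 * Aᵀ with hBdef
  set R : Matrix (Fin d) (Fin d) ℝ := (open scoped MatrixOrder in CFC.sqrt B) with hRdef
  have hRR : R * R = B := by open scoped MatrixOrder in exact CFC.sqrt_mul_sqrt_self B hB.nonneg
  have hRsym : Rᵀ = R := by
    have := (by open scoped MatrixOrder in exact (CFC.sqrt_nonneg B).posSemidef : R.PosSemidef).1
    rwa [IsHermitian, hct] at this
  have hSig0sym : Sig0ᵀ = Sig0 := by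
    have := hSig0.isHermitian
    rwa [IsHermitian, hct] at this
  have hSig0u : IsUnit Sig0.det := hSig0.isUnit.map detMonoidHom
  have hAt : IsUnit Aᵀ.det := by rwa [det_transpose]
  have hBu : IsUnit B.det := by
    rw [hBdef, det_mul, det_mul]
    exact (hA.mul hSig0u).mul hAt
  have hRu : IsUnit R.det := by
    have h2 : R.det * R.det = B.det := by rw [← det_mul, hRR]
    exact isUnit_of_mul_isUnit_left (h2 ▸ hBu)
  have hRinvsym : (R⁻¹)ᵀ = R⁻¹ := by rw [transpose_nonsing_inv, hRsym]
  set T : Matrix (Fin d) (Fin m) ℝ := R * S with hTdef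
  have hTT : Tᵀ * T = 1 := by
    rw [hTdef, transpose_mul, hRsym]
    have : Sᵀ * R * (R * S) = Sᵀ * (R * R) * S := by simp only [Matrix.mul_assoc]
    rw [this, hRR]
    exact hS
  -- 1 - T Tᵀ is PSD
  have hP : (1 - T * Tᵀ).PosSemidef := by
    have hproj : T * Tᵀ * (T * Tᵀ) = T * Tᵀ := by
      have : T * Tᵀ * (T * Tᵀ) = T * (Tᵀ * T) * Tᵀ := by simp only [Matrix.mul_assoc]
      rw [this, hTT, Matrix.mul_one]
    have hidem : (1 - T * Tᵀ) * (1 - T * Tᵀ) = 1 - T * Tᵀ := by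
      rw [mul_sub, sub_mul, sub_mul]
      simp [hproj]
    have hPsym : (1 - T * Tᵀ)ᵀ = 1 - T * Tᵀ := by
      rw [transpose_sub, transpose_one, transpose_mul, transpose_transpose]
    have : (1 - T * Tᵀ) = (1 - T * Tᵀ)ᴴ * (1 - T * Tᵀ) := by
      rw [hct, hPsym, hidem]
    rw [this]
    exact posSemidef_conjTranspose_mul_self _
  set W : Matrix (Fin d) (Fin d) ℝ := R⁻¹ * A * Sig0 with hWdef
  have key : Sig0 - Sig0 * Aᵀ * S * Sᵀ * A * Sig0 = Wᵀ * (1 - T * Tᵀ) * W := by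
    have hWt : Wᵀ = Sig0 * Aᵀ * R⁻¹ := by
      rw [hWdef, transpose_mul, transpose_mul, hRinvsym, hSig0sym, mul_assoc]
    have h1 : Wᵀ * W = Sig0 := by
      rw [hWt, hWdef]
      have hBinv : R⁻¹ * R⁻¹ = Aᵀ⁻¹ * Sig0⁻¹ * A⁻¹ := by
        rw [← Matrix.mul_inv_rev, hRR, hBdef, Matrix.mul_inv_rev, Matrix.mul_inv_rev,
          mul_assoc]
      have h0 : Sig0 * Aᵀ * R⁻¹ * (R⁻¹ * A * Sig0)
          = Sig0 * (Aᵀ * (R⁻¹ * R⁻¹) * A) * Sig0 := by simp only [Matrix.mul_assoc]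
      rw [h0, hBinv]
      have h0' : Sig0 * (Aᵀ * (Aᵀ⁻¹ * Sig0⁻¹ * A⁻¹) * A) * Sig0
          = Sig0 * ((Aᵀ * Aᵀ⁻¹) * Sig0⁻¹ * (A⁻¹ * A)) * Sig0 := by
        simp only [Matrix.mul_assoc]
      rw [h0', Matrix.mul_nonsing_inv _ hAt, Matrix.nonsing_inv_mul _ hA, one_mul,
        mul_one, Matrix.mul_nonsing_inv _ hSig0u, one_mul]
    have h2 : Wᵀ * (T * Tᵀ) * W = Sig0 * Aᵀ * S * Sᵀ * A * Sig0 := by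
      rw [hWt, hWdef, hTdef, transpose_mul, hRsym]
      simp only [Matrix.mul_assoc]
      rw [← Matrix.mul_assoc R⁻¹ R, Matrix.nonsing_inv_mul _ hRu, one_mul,
        ← Matrix.mul_assoc R R⁻¹, Matrix.mul_nonsing_inv _ hRu, one_mul]
    rw [mul_sub, sub_mul, mul_one, h1, h2]
  rw [key]
  have := hP.conjTranspose_mul_mul_same W
  rwa [hct] at this
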